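/- Let d, p and r be positive integers, C ≥ 0, σ ≥ 0, B > 0, and η_1, …, η_r ≥ 0 real numbers. Let {Y_j^k : 1 ≤ j ≤ p, 1 ≤ k ≤ r} be mutually independent, square-integrable random vectors in ℝ^d on a probability space, with means m_j^k = 𝔼[Y_j^k] and 𝔼[‖Y_j^k − m_j^k‖²] ≤ C‖m_j^k‖² + σ²/B. Fix x_0 ∈ ℝ^d, set x_j = x_0 − ∑_{k=1}^r η_k Y_j^k for each j, and x̄ = (1/p)∑_{j=1}^p x_j. Then ∑_{j=1}^p 𝔼[‖x̄ − x_j‖²] ≤ 2·((p+1)/p)·(C + 2r)·∑_{k=1}^r η_k² ∑_{j=1}^p ‖m_j^k‖² + 2(p+1)·∑_{k=1}^r η_k²·σ²/B. -/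

import Mathlib

open MeasureTheory ProbabilityTheory
open scoped BigOperators RealInnerProductSpace

section Aux
variable {Ω : Type*} [MeasureSpace Ω] [IsProbabilityMeasure (ℙ : Measure Ω)]
variable {E : Type*} [NormedAddCommGroup E] [InnerProductSpace ℝ E]

omit [IsProbabilityMeasure (ℙ : Measure Ω)] in
lemma lupa_integrable_inner {f g : Ω → E} (hf : MemLp f 2 ℙ) (hg : MemLp g 2 ℙ) :
    Integrable (fun ω => ⟪f ω, g ω⟫) ℙ := by
  have hfsq : Integrable (fun ω => ‖f ω‖ ^ 2) ℙ :=
    (memLp_two_iff_integrable_sq_norm hf.1).mp hf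
  have hgsq : Integrable (fun ω => ‖g ω‖ ^ 2) ℙ :=
    (memLp_two_iff_integrable_sq_norm hg.1).mp hg
  refine Integrable.mono' (hfsq.add hgsq) (hf.1.inner hg.1) ?_
  filter_upwards with ω
  simp only [Pi.add_apply]
  have h1 : ‖⟪f ω, g ω⟫‖ ≤ ‖f ω‖ * ‖g ω‖ := norm_inner_le_norm _ _
  nlinarith [norm_nonneg (f ω), norm_nonneg (g ω), sq_nonneg (‖f ω‖ - ‖g ω‖)]

omit [IsProbabilityMeasure (ℙ : Measure Ω)] in
lemma lupa_integrable_mul {f g : Ω → ℝ} (hf : MemLp f 2 ℙ) (hg : MemLp g 2 ℙ) :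
    Integrable (fun ω => f ω * g ω) ℙ := by
  have := lupa_integrable_inner hf hg
  simpa [RCLike.inner_apply, mul_comm] using this

omit [IsProbabilityMeasure (ℙ : Measure Ω)] in
lemma lupa_integral_norm_sq_sum {ι : Type*} [Fintype ι] (Z : ι → Ω → E)
    (hZ : ∀ a, MemLp (Z a) 2 ℙ)
    (horth : ∀ a b, a ≠ b → (∫ ω, ⟪Z a ω, Z b ω⟫) = 0) :
    (∫ ω, ‖∑ a, Z a ω‖ ^ 2) = ∑ a, ∫ ω, ‖Z a ω‖ ^ 2 := by
  have hexp : ∀ ω, ‖∑ a, Z a ω‖ ^ 2 = ∑ a, ∑ b, ⟪Z a ω, Z b ω⟫ := by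
    intro ω
    rw [← real_inner_self_eq_norm_sq, sum_inner]
    exact Finset.sum_congr rfl fun a _ => inner_sum _ _ _
  simp_rw [hexp]
  rw [integral_finset_sum _ fun a _ => integrable_finset_sum _
    fun b _ => lupa_integrable_inner (hZ a) (hZ b)]
  refine Finset.sum_congr rfl fun a _ => ?_
  rw [integral_finset_sum _ fun b _ => lupa_integrable_inner (hZ a) (hZ b)]
  rw [Finset.sum_eq_single_of_mem a (Finset.mem_univ a)
    (fun b _ hb => horth a b (Ne.symm hb))]
  simp_rw [real_inner_self_eq_norm_sq]

omit [InnerProductSpace ℝ E] in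
lemma lupa_norm_sum_sq_le {ι : Type*} (s : Finset ι) (f : ι → E) :
    ‖∑ k ∈ s, f k‖ ^ 2 ≤ s.card * ∑ k ∈ s, ‖f k‖ ^ 2 := by
  calc ‖∑ k ∈ s, f k‖ ^ 2 ≤ (∑ k ∈ s, ‖f k‖) ^ 2 := by
        have := norm_sum_le s f
        nlinarith [norm_nonneg (∑ k ∈ s, f k),
          Finset.sum_nonneg (fun k (_ : k ∈ s) => norm_nonneg (f k))]
    _ ≤ s.card * ∑ k ∈ s, ‖f k‖ ^ 2 := sq_sum_le_card_mul_sum_sq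

lemma lupa_centering {n : ℕ} (hn : 0 < n) (v : Fin n → E) :
    ∑ j, ‖v j - (n : ℝ)⁻¹ • ∑ i, v i‖ ^ 2 ≤ ∑ j, ‖v j‖ ^ 2 := by
  set s := ∑ i, v i with hs
  have hn' : (0:ℝ) < n := by exact_mod_cast hn
  have hsum : ∑ j, ⟪v j, s⟫ = ‖s‖ ^ 2 := by
    rw [← sum_inner, ← hs, real_inner_self_eq_norm_sq]
  have hexp : ∀ j, ‖v j - (n : ℝ)⁻¹ • s‖ ^ 2
      = ‖v j‖ ^ 2 - (2 * (n : ℝ)⁻¹) * ⟪v j, s⟫ + (n : ℝ)⁻¹ ^ 2 * ‖s‖ ^ 2 := by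
    intro j
    rw [norm_sub_sq_real, real_inner_smul_right, norm_smul]
    simp only [Real.norm_eq_abs, mul_pow, sq_abs]
    ring
  simp_rw [hexp]
  rw [Finset.sum_add_distrib, Finset.sum_sub_distrib, ← Finset.mul_sum, hsum]
  simp only [Finset.sum_const, Finset.card_univ, Fintype.card_fin, nsmul_eq_mul]
  have h2 : (n:ℝ) * ((n : ℝ)⁻¹ ^ 2 * ‖s‖ ^ 2) = (n:ℝ)⁻¹ * ‖s‖ ^ 2 := by
    field_simp
  rw [h2]
  nlinarith [sq_nonneg ‖s‖, inv_pos.mpr hn']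

lemma lupa_orth {d : ℕ} {f g : Ω → EuclideanSpace ℝ (Fin d)} (hind : IndepFun f g ℙ)
    (hf : MemLp f 2 ℙ) (hg : MemLp g 2 ℙ)
    (hf0 : (∫ ω, f ω) = 0) :
    (∫ ω, ⟪f ω, g ω⟫) = 0 := by
  have hinner : ∀ ω, ⟪f ω, g ω⟫ = ∑ i, f ω i * g ω i := by
    intro ω
    simp [PiLp.inner_apply, RCLike.inner_apply, mul_comm]
  simp_rw [hinner]
  have hfi : ∀ i, MemLp (fun ω => f ω i) 2 ℙ := fun i => by
    exact (EuclideanSpace.proj (𝕜 := ℝ) i).comp_memLp' hf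
  have hgi : ∀ i, MemLp (fun ω => g ω i) 2 ℙ := fun i => by
    exact (EuclideanSpace.proj (𝕜 := ℝ) i).comp_memLp' hg
  rw [integral_finset_sum _ fun i _ => lupa_integrable_mul (hfi i) (hgi i)]
  refine Finset.sum_eq_zero fun i _ => ?_
  have hmes : Measurable fun v : EuclideanSpace ℝ (Fin d) => v i :=
    (EuclideanSpace.proj (𝕜 := ℝ) i).continuous.measurable
  have hindi : IndepFun (fun ω => f ω i) (fun ω => g ω i) ℙ := hind.comp hmes hmes
  have hf0i : (∫ ω, f ω i) = 0 := by
    have h := (EuclideanSpace.proj (𝕜 := ℝ) i).integral_comp_comm (hf.integrable one_le_two)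
    simpa [hf0] using h
  have hmul := hindi.integral_mul_eq_mul_integral (hfi i).1 (hgi i).1
  rw [hf0i, zero_mul] at hmul
  exact hmul

end Aux

set_option maxHeartbeats 1000000 in
/-- Deviation of the local models from their average after `r` local
stochastic gradient steps from a common starting point `x₀` with step sizes `η k`,
for mutually independent stochastic gradients `Y j k` that are unbiased estimators of
`m j k` with variance bounded by `C‖m j k‖² + σ²/B`. -/
theorem lupa_local_model_deviation
    (d p r : ℕ) (hd : 0 < d) (hp : 0 < p) (hr : 0 < r)
    (C σ B : ℝ) (hC : 0 ≤ C) (hσ : 0 ≤ σ) (hB : 0 < B)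
    (η : Fin r → ℝ) (hη : ∀ k, 0 ≤ η k)
    (Ω : Type*) [MeasureSpace Ω] [IsProbabilityMeasure (ℙ : Measure Ω)]
    (Y : Fin p × Fin r → Ω → EuclideanSpace ℝ (Fin d))
    (hindep : iIndepFun Y ℙ)
    (hL2 : ∀ jk, MemLp (Y jk) 2 ℙ)
    (m : Fin p × Fin r → EuclideanSpace ℝ (Fin d))
    (hmean : ∀ jk, (∫ ω, Y jk ω) = m jk)
    (hvar : ∀ jk, (∫ ω, ‖Y jk ω - m jk‖ ^ 2) ≤ C * ‖m jk‖ ^ 2 + σ ^ 2 / B)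
    (x₀ : EuclideanSpace ℝ (Fin d))
    (x : Fin p → Ω → EuclideanSpace ℝ (Fin d))
    (hx : ∀ j ω, x j ω = x₀ - ∑ k, η k • Y (j, k) ω)
    (xbar : Ω → EuclideanSpace ℝ (Fin d))
    (hxbar : ∀ ω, xbar ω = (p : ℝ)⁻¹ • ∑ j, x j ω) :
    ∑ j, (∫ ω, ‖xbar ω - x j ω‖ ^ 2)
      ≤ 2 * (((p : ℝ) + 1) / p) * (C + 2 * r) * ∑ k, η k ^ 2 * ∑ j, ‖m (j, k)‖ ^ 2
        + 2 * ((p : ℝ) + 1) * ∑ k, η k ^ 2 * (σ ^ 2 / B) := by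
  have hp' : (0:ℝ) < p := by exact_mod_cast hp
  have hp0 : (p:ℝ) ≠ 0 := ne_of_gt hp'
  -- centered variables
  set Z : Fin p × Fin r → Ω → EuclideanSpace ℝ (Fin d) := fun a ω => Y a ω - m a with hZdef
  have hZ2 : ∀ a, MemLp (Z a) 2 ℙ := fun a => (hL2 a).sub (memLp_const (m a))
  have hYint : ∀ a, Integrable (Y a) ℙ := fun a => (hL2 a).integrable one_le_two
  have hZ0 : ∀ a, (∫ ω, Z a ω) = 0 := by
    intro a
    simp only [hZdef]
    rw [integral_sub (hYint a) (integrable_const (m a)), hmean]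
    simp
  -- orthogonality
  have horth : ∀ a b, a ≠ b → (∫ ω, ⟪Z a ω, Z b ω⟫) = 0 := by
    intro a b hab
    have hYind : IndepFun (Y a) (Y b) ℙ := hindep.indepFun hab
    have hZind : IndepFun (Z a) (Z b) ℙ :=
      hYind.comp (measurable_id.sub measurable_const) (measurable_id.sub measurable_const)
    exact lupa_orth hZind (hZ2 a) (hZ2 b) (hZ0 a)
  -- coefficients and the fluctuation part
  set c : Fin p → Fin p × Fin r → ℝ :=
    fun j a => η a.2 * ((if a.1 = j then 1 else 0) - (p:ℝ)⁻¹) with hcdef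
  set W : Fin p → Ω → EuclideanSpace ℝ (Fin d) :=
    fun j ω => ∑ a, c j a • Z a ω with hWdef
  set A : Fin p → EuclideanSpace ℝ (Fin d) :=
    fun j => ∑ k, η k • (m (j,k) - (p:ℝ)⁻¹ • ∑ i, m (i,k)) with hAdef
  -- key decomposition
  have hkey : ∀ j ω, xbar ω - x j ω = A j + W j ω := by
    intro j ω
    have hL : xbar ω - x j ω
        = (∑ k, η k • Y (j,k) ω) - (p:ℝ)⁻¹ • ∑ i, ∑ k, η k • Y (i,k) ω := by
      rw [hxbar]
      simp only [hx]
      rw [Finset.sum_sub_distrib, smul_sub, Finset.sum_const, Finset.card_univ,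
        Fintype.card_fin, ← Nat.cast_smul_eq_nsmul ℝ, smul_smul,
        inv_mul_cancel₀ hp0, one_smul]
      abel
    have hWj : W j ω = (∑ k, η k • Z (j,k) ω) - (p:ℝ)⁻¹ • ∑ i, ∑ k, η k • Z (i,k) ω := by
      simp only [hWdef]
      rw [Fintype.sum_prod_type]
      have hterm : ∀ i k, c j (i,k) • Z (i,k) ω
          = (if i = j then η k • Z (i,k) ω else 0) - (p:ℝ)⁻¹ • (η k • Z (i,k) ω) := by
        intro i k
        by_cases h : i = j <;> simp [hcdef, h] <;> module
      simp_rw [hterm, Finset.sum_sub_distrib]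
      congr 1
      · rw [Finset.sum_eq_single_of_mem j (Finset.mem_univ j)]
        · simp
        · intro i _ hij
          simp [hij]
      · simp_rw [← Finset.smul_sum]
    have hAj : A j = (∑ k, η k • m (j,k)) - (p:ℝ)⁻¹ • ∑ i, ∑ k, η k • m (i,k) := by
      simp only [hAdef, smul_sub]
      rw [Finset.sum_sub_distrib]
      congr 1
      rw [Finset.sum_comm, Finset.smul_sum]
      refine Finset.sum_congr rfl fun k _ => ?_
      rw [smul_comm, Finset.smul_sum]
    have hYsplit : ∀ i k, η k • Y (i,k) ω = η k • m (i,k) + η k • Z (i,k) ω := by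
      intro i k
      simp only [hZdef]
      rw [← smul_add]
      congr 1
      abel
    rw [hL, hAj, hWj]
    simp only [hYsplit, Finset.sum_add_distrib, smul_add]
    abel
  -- L² facts for W
  have hW2 : ∀ j, MemLp (W j) 2 ℙ := by
    intro j
    simp only [hWdef]
    exact memLp_finset_sum _ fun a _ => (hZ2 a).const_smul (c j a)
  have hWint : ∀ j, Integrable (fun ω => ‖W j ω‖ ^ 2) ℙ := fun j =>
    (memLp_two_iff_integrable_sq_norm (hW2 j).1).mp (hW2 j)
  -- second moment of W via orthogonality
  have hWvar : ∀ j, (∫ ω, ‖W j ω‖ ^ 2) = ∑ a, (c j a) ^ 2 * ∫ ω, ‖Z a ω‖ ^ 2 := by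
    intro j
    simp only [hWdef]
    rw [lupa_integral_norm_sq_sum (fun a ω => c j a • Z a ω)
        (fun a => (hZ2 a).const_smul (c j a))
        (fun a b hab => by
          simp_rw [real_inner_smul_left, real_inner_smul_right, integral_const_mul,
            horth a b hab]
          ring)]
    refine Finset.sum_congr rfl fun a _ => ?_
    have h1 : ∀ ω, ‖c j a • Z a ω‖ ^ 2 = (c j a) ^ 2 * ‖Z a ω‖ ^ 2 := by
      intro ω
      rw [norm_smul, mul_pow, Real.norm_eq_abs, sq_abs]
    simp_rw [h1, integral_const_mul]
  -- bound on the coefficients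
  have hcsum : ∀ a : Fin p × Fin r, ∑ j, (c j a) ^ 2 ≤ η a.2 ^ 2 := by
    intro a
    have ht : ∀ j : Fin p, ((if a.1 = j then (1:ℝ) else 0) - (p:ℝ)⁻¹) ^ 2
        = (if a.1 = j then ((1 - (p:ℝ)⁻¹) ^ 2 - ((p:ℝ)⁻¹) ^ 2) else 0) + ((p:ℝ)⁻¹) ^ 2 := by
      intro j
      by_cases h : a.1 = j <;> simp [h]
    have hsum : ∑ j : Fin p, ((if a.1 = j then (1:ℝ) else 0) - (p:ℝ)⁻¹) ^ 2
        = 1 - (p:ℝ)⁻¹ := by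
      simp_rw [ht]
      rw [Finset.sum_add_distrib, Finset.sum_ite_eq, Finset.sum_const, Finset.card_univ,
        Fintype.card_fin]
      simp only [Finset.mem_univ, if_true, nsmul_eq_mul]
      field_simp
      ring
    simp only [hcdef, mul_pow]
    rw [← Finset.mul_sum, hsum]
    have hinv : 0 ≤ (p:ℝ)⁻¹ := by positivity
    nlinarith [sq_nonneg (η a.2)]
  -- bound on the fluctuation part
  have hW_bound : ∑ j, (∫ ω, ‖W j ω‖ ^ 2)
      ≤ ∑ k, η k ^ 2 * (C * (∑ j, ‖m (j,k)‖ ^ 2) + p * (σ ^ 2 / B)) := by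
    have h1 : ∑ j, (∫ ω, ‖W j ω‖ ^ 2)
        = ∑ a : Fin p × Fin r, (∑ j, (c j a) ^ 2) * ∫ ω, ‖Z a ω‖ ^ 2 := by
      simp_rw [hWvar]
      rw [Finset.sum_comm]
      exact Finset.sum_congr rfl fun a _ => (Finset.sum_mul _ _ _).symm
    have h2 : ∀ a : Fin p × Fin r,
        (∑ j, (c j a) ^ 2) * (∫ ω, ‖Z a ω‖ ^ 2)
          ≤ η a.2 ^ 2 * (C * ‖m a‖ ^ 2 + σ ^ 2 / B) := by
      intro a
      have hZpos : 0 ≤ ∫ ω, ‖Z a ω‖ ^ 2 := integral_nonneg fun ω => sq_nonneg _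
      have hZvar : (∫ ω, ‖Z a ω‖ ^ 2) ≤ C * ‖m a‖ ^ 2 + σ ^ 2 / B := hvar a
      calc (∑ j, (c j a) ^ 2) * (∫ ω, ‖Z a ω‖ ^ 2)
          ≤ η a.2 ^ 2 * (∫ ω, ‖Z a ω‖ ^ 2) :=
            mul_le_mul_of_nonneg_right (hcsum a) hZpos
        _ ≤ η a.2 ^ 2 * (C * ‖m a‖ ^ 2 + σ ^ 2 / B) :=
            mul_le_mul_of_nonneg_left hZvar (sq_nonneg _)
    calc ∑ j, (∫ ω, ‖W j ω‖ ^ 2)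
        ≤ ∑ a : Fin p × Fin r, η a.2 ^ 2 * (C * ‖m a‖ ^ 2 + σ ^ 2 / B) := by
          rw [h1]; exact Finset.sum_le_sum fun a _ => h2 a
      _ = ∑ k, η k ^ 2 * (C * (∑ j, ‖m (j,k)‖ ^ 2) + p * (σ ^ 2 / B)) := by
          rw [Fintype.sum_prod_type, Finset.sum_comm]
          refine Finset.sum_congr rfl fun k _ => ?_
          dsimp only
          rw [← Finset.mul_sum]
          congr 1
          rw [Finset.sum_add_distrib, ← Finset.mul_sum, Finset.sum_const, Finset.card_univ,
            Fintype.card_fin, nsmul_eq_mul]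
  -- bound on the mean part
  have hA_bound : ∑ j, ‖A j‖ ^ 2 ≤ r * ∑ k, η k ^ 2 * ∑ j, ‖m (j,k)‖ ^ 2 := by
    have h1 : ∀ j, ‖A j‖ ^ 2
        ≤ r * ∑ k, η k ^ 2 * ‖m (j,k) - (p:ℝ)⁻¹ • ∑ i, m (i,k)‖ ^ 2 := by
      intro j
      have := lupa_norm_sum_sq_le Finset.univ
        (fun k => η k • (m (j,k) - (p:ℝ)⁻¹ • ∑ i, m (i,k)))
      simp only [hAdef]
      simpa [norm_smul, mul_pow, sq_abs, Finset.card_univ, Fintype.card_fin] using this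
    calc ∑ j, ‖A j‖ ^ 2
        ≤ ∑ j, (r * ∑ k, η k ^ 2 * ‖m (j,k) - (p:ℝ)⁻¹ • ∑ i, m (i,k)‖ ^ 2) :=
          Finset.sum_le_sum fun j _ => h1 j
      _ = r * ∑ k, η k ^ 2 * ∑ j, ‖m (j,k) - (p:ℝ)⁻¹ • ∑ i, m (i,k)‖ ^ 2 := by
          rw [← Finset.mul_sum, Finset.sum_comm]
          congr 1
          exact Finset.sum_congr rfl fun k _ => (Finset.mul_sum _ _ _).symm
      _ ≤ r * ∑ k, η k ^ 2 * ∑ j, ‖m (j,k)‖ ^ 2 := by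
          refine mul_le_mul_of_nonneg_left (Finset.sum_le_sum fun k _ => ?_) (by positivity)
          exact mul_le_mul_of_nonneg_left (lupa_centering hp fun i => m (i,k)) (sq_nonneg _)
  -- per-j bound
  have hjb : ∀ j, (∫ ω, ‖xbar ω - x j ω‖ ^ 2)
      ≤ 2 * ‖A j‖ ^ 2 + 2 * ∫ ω, ‖W j ω‖ ^ 2 := by
    intro j
    have h1 : (fun ω => ‖xbar ω - x j ω‖ ^ 2) = fun ω => ‖A j + W j ω‖ ^ 2 := by
      funext ω; rw [hkey j ω]
    rw [h1]
    have hAWmem : MemLp (fun ω => A j + W j ω) 2 ℙ := (memLp_const (A j)).add (hW2 j)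
    have hAWint : Integrable (fun ω => ‖A j + W j ω‖ ^ 2) ℙ :=
      (memLp_two_iff_integrable_sq_norm hAWmem.1).mp hAWmem
    have h2 : (∫ ω, ‖A j + W j ω‖ ^ 2)
        ≤ ∫ ω, (2 * ‖A j‖ ^ 2 + 2 * ‖W j ω‖ ^ 2) := by
      refine integral_mono hAWint ((integrable_const _).add ((hWint j).const_mul 2)) ?_
      intro ω
      have h3 : ‖A j + W j ω‖ ≤ ‖A j‖ + ‖W j ω‖ := norm_add_le _ _
      simp only [Pi.add_apply]
      nlinarith [norm_nonneg (A j + W j ω), norm_nonneg (A j), norm_nonneg (W j ω),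
        sq_nonneg (‖A j‖ - ‖W j ω‖)]
    rw [integral_add (integrable_const _) ((hWint j).const_mul 2), integral_const,
      integral_const_mul] at h2
    simpa using h2
  -- assembly
  have hfinal : ∑ j, (∫ ω, ‖xbar ω - x j ω‖ ^ 2)
      ≤ 2 * (r * ∑ k, η k ^ 2 * ∑ j, ‖m (j,k)‖ ^ 2)
        + 2 * ∑ k, η k ^ 2 * (C * (∑ j, ‖m (j,k)‖ ^ 2) + p * (σ ^ 2 / B)) := by
    calc ∑ j, (∫ ω, ‖xbar ω - x j ω‖ ^ 2)
        ≤ ∑ j, (2 * ‖A j‖ ^ 2 + 2 * ∫ ω, ‖W j ω‖ ^ 2) := Finset.sum_le_sum fun j _ => hjb j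
      _ = 2 * ∑ j, ‖A j‖ ^ 2 + 2 * ∑ j, (∫ ω, ‖W j ω‖ ^ 2) := by
          rw [Finset.sum_add_distrib, ← Finset.mul_sum, ← Finset.mul_sum]
      _ ≤ _ := add_le_add (mul_le_mul_of_nonneg_left hA_bound (by norm_num))
          (mul_le_mul_of_nonneg_left hW_bound (by norm_num))
  refine hfinal.trans ?_
  rw [Finset.mul_sum, Finset.mul_sum, Finset.mul_sum, Finset.mul_sum, Finset.mul_sum,
    ← Finset.sum_add_distrib, ← Finset.sum_add_distrib]
  refine Finset.sum_le_sum fun k _ => ?_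
  have hS : (0:ℝ) ≤ ∑ j, ‖m (j,k)‖ ^ 2 := Finset.sum_nonneg fun j _ => sq_nonneg _
  have hσB : (0:ℝ) ≤ σ ^ 2 / B := by positivity
  have hq : (1:ℝ) ≤ ((p:ℝ) + 1) / p := by
    rw [le_div_iff₀ hp']; linarith
  have hr' : (1:ℝ) ≤ r := by exact_mod_cast hr
  have h1 : (C + 2 * r) ≤ (((p:ℝ) + 1) / p) * (C + 2 * r) :=
    le_mul_of_one_le_left (by positivity) hq
  nlinarith [mul_le_mul_of_nonneg_right h1 (mul_nonneg (sq_nonneg (η k)) hS),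
    mul_nonneg (mul_nonneg (by positivity : (0:ℝ) ≤ (r:ℝ)) (sq_nonneg (η k))) hS,
    mul_nonneg (sq_nonneg (η k)) hσB]
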